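/- Under the isometry Ξ : L²(S¹,ℂⁿ) → L²(S¹,ℂ) (sending e_{α,k} to z^{nk+α−1}), a closed subspace W ⊆ L²(S¹,ℂⁿ) satisfies z·W ⊆ W if and only if the subspace Ξ(W) ⊆ L²(S¹,ℂ) satisfies zⁿ·Ξ(W) ⊆ Ξ(W). -/
import Mathlib


/-- The isometry `Ξ` in the Fourier-coefficient model: a vector-valued
coefficient family `f : ℤ × Fin n → ℂ` (component `α`, frequency `k`,
representing `e_{α,k} = z^k` in slot `α`) is sent to the scalar coefficient
family `j ↦ f (j / n, j % n)`, i.e. `e_{α,k} ↦ z^{nk+α}`. -/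
def xiMap (n : ℕ) (hn : 0 < n) : ((ℤ × Fin n) → ℂ) →ₗ[ℂ] (ℤ → ℂ) where
  toFun f := fun j =>
    f (j / (n : ℤ), ⟨(j % (n : ℤ)).toNat, by
      have h1 : 0 ≤ j % (n : ℤ) := Int.emod_nonneg j (by exact_mod_cast hn.ne')
      have h2 : j % (n : ℤ) < (n : ℤ) := Int.emod_lt_of_pos j (by exact_mod_cast hn)
      omega⟩)
  map_add' _ _ := rfl
  map_smul' _ _ := rfl

/-- Multiplication by `z` on `L²(S¹,ℂⁿ)` in the Fourier model: shift every
frequency by one (in each component). -/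
def mulZVec (n : ℕ) : ((ℤ × Fin n) → ℂ) →ₗ[ℂ] ((ℤ × Fin n) → ℂ) where
  toFun f := fun p => f (p.1 - 1, p.2)
  map_add' _ _ := rfl
  map_smul' _ _ := rfl

/-- Multiplication by `zⁿ` on `L²(S¹,ℂ)` in the Fourier model: shift the
frequency by `n`. -/
def mulZPowScalar (n : ℕ) : (ℤ → ℂ) →ₗ[ℂ] (ℤ → ℂ) where
  toFun f := fun j => f (j - (n : ℤ))
  map_add' _ _ := rfl
  map_smul' _ _ := rfl

lemma xiMap_comm (n : ℕ) (hn : 0 < n) (f : (ℤ × Fin n) → ℂ) :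
    xiMap n hn (mulZVec n f) = mulZPowScalar n (xiMap n hn f) := by
  funext j
  show f (j / (n : ℤ) - 1, _) = f ((j - n) / (n : ℤ), _)
  have hd : (j - (n : ℤ)) / (n : ℤ) = j / (n : ℤ) - 1 := by
    rw [show j - (n:ℤ) = j + (-1) * (n:ℤ) by ring,
      Int.add_mul_ediv_right _ _ (by exact_mod_cast hn.ne' : (n:ℤ) ≠ 0)]; ring
  have hm : (j - (n : ℤ)) % (n : ℤ) = j % (n : ℤ) := by simp [Int.sub_emod]
  congr 1
  refine Prod.ext hd.symm (Fin.ext ?_)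
  simp [hm]

lemma xiMap_injective (n : ℕ) (hn : 0 < n) :
    Function.Injective (xiMap n hn) := by
  intro f g h
  funext p
  obtain ⟨k, α⟩ := p
  have := congrFun h ((n : ℤ) * k + (α : ℤ))
  have hne : (n : ℤ) ≠ 0 := by exact_mod_cast hn.ne'
  have hα0 : (0 : ℤ) ≤ (α : ℤ) := by positivity
  have hαn : ((α : ℤ)) < (n : ℤ) := by exact_mod_cast α.isLt
  have hd : ((n : ℤ) * k + (α : ℤ)) / (n : ℤ) = k := by
    rw [add_comm, Int.add_mul_ediv_left _ _ hne, Int.ediv_eq_zero_of_lt hα0 hαn]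
    ring
  have hm : ((n : ℤ) * k + (α : ℤ)) % (n : ℤ) = (α : ℤ) := by
    rw [add_comm, Int.add_mul_emod_self_left, Int.emod_eq_of_lt hα0 hαn]
  simp only [xiMap, LinearMap.coe_mk, AddHom.coe_mk] at this
  convert this using 2 <;>
  · refine Prod.ext hd.symm (Fin.ext ?_)
    simp [hm]

theorem z_invariant_iff_zpow_invariant (n : ℕ) (hn : 0 < n)
    (W : Submodule ℂ ((ℤ × Fin n) → ℂ)) :
    W.map (mulZVec n) ≤ W ↔
      (W.map (xiMap n hn)).map (mulZPowScalar n) ≤ W.map (xiMap n hn) := by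
  have key : (W.map (xiMap n hn)).map (mulZPowScalar n)
      = (W.map (mulZVec n)).map (xiMap n hn) := by
    rw [← Submodule.map_comp, ← Submodule.map_comp]
    congr 1
    ext f j
    exact congrFun (xiMap_comm n hn f).symm j
  rw [key]
  constructor
  · intro h
    exact Submodule.map_mono h
  · intro h
    intro x hx
    have : (xiMap n hn) x ∈ W.map (xiMap n hn) :=
      h ⟨x, hx, rfl⟩
    obtain ⟨y, hy, hyx⟩ := this
    rwa [← xiMap_injective n hn hyx]
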